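/- Let A₁,…,A_{n+2} : ℝ → ℝⁿ be C¹ maps such that A₁(0),…,A_{n+2}(0) are in general position, let α₁,…,α_{n+2} be nonzero reals with Σᵢ αᵢ = 0 and Σᵢ αᵢAᵢ(0) = 0, and fix 1 ≤ k ≤ n. For a (k+1)-subset S = {i₁<⋯<i_{k+1}} of {1,…,n+2}, let V_S(t) := det(⟨A_{i_a}(t) − A_{i₁}(t), A_{i_b}(t) − A_{i₁}(t)⟩)_{2≤a,b≤k+1} be the Gram determinant (squared k-volume) of the corresponding k-face. Suppose ε > 0 and that either (case G_{n,k}) for every (k+1)-subset S, V_S is nonincreasing on [0,ε] when ∏_{i∈S} αᵢ < 0 and nondecreasing on [0,ε] when ∏_{i∈S} αᵢ > 0, or (case F_{n,k}) for every (k+1)-subset S, V_S is nondecreasing on [0,ε] when ∏_{i∈S} αᵢ < 0 and nonincreasing on [0,ε] when ∏_{i∈S} αᵢ > 0. Then there exists ε' ∈ (0,ε] such that V_S(t) = V_S(0) for every (k+1)-subset S and every t ∈ [0,ε']; that is, G_{n,k} and F_{n,k} are k-unyielding in ℝⁿ for C¹ motions. -/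

import Mathlib

set_option maxHeartbeats 2000000

/-- Points `A₁, …, A_m` in `ℝ^d` are in general position if every `d+1` of them are
affinely independent. -/
def InGeneralPosition {d m : ℕ} (A : Fin m → EuclideanSpace ℝ (Fin d)) : Prop :=
  ∀ s : Finset (Fin m), s.card = d + 1 → AffineIndependent ℝ (fun i : ↥s => A i.1)

/-- The Gram determinant of the face with vertex set `s = {i₁ < ⋯ < i_{k+1}}`:
`det(⟨A_{i_a} − A_{i₁}, A_{i_b} − A_{i₁}⟩)_{2 ≤ a,b ≤ k+1}`, which equals `(k!)²` times
the squared `k`-volume of the corresponding simplex. -/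
noncomputable def gramFace {d m : ℕ} (A : Fin m → EuclideanSpace ℝ (Fin d))
    (s : Finset (Fin m)) : ℝ :=
  if h : s.Nonempty then
    Matrix.det (Matrix.of fun (a b : ↥(s.erase (s.min' h))) =>
      (inner ℝ (A a.1 - A (s.min' h)) (A b.1 - A (s.min' h)) : ℝ))
  else 0

open Matrix Finset Polynomial Set

section MatrixLemmas

variable {R : Type*} [CommRing R] {ι : Type*} [Fintype ι] [DecidableEq ι]

noncomputable def pminor (M : Matrix ι ι R) (s : Finset ι) : R :=
  (M.submatrix (fun a : ↥s => (a : ι)) (fun a : ↥s => (a : ι))).det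

lemma det_eq_pminor_of_unit_rows (M : Matrix ι ι R) (s : Finset ι)
    (h : ∀ i ∉ s, ∀ j, M i j = if i = j then 1 else 0) :
    M.det = pminor M s := by
  classical
  show M.det = (M.submatrix (fun a : ↥s => (a : ι)) (fun a : ↥s => (a : ι))).det
  let e : {a : ι // a ∈ s} ⊕ {a : ι // ¬ a ∈ s} ≃ ι := Equiv.sumCompl (· ∈ s)
  have h1 : M.submatrix e e = fromBlocks
      (M.submatrix (fun a : ↥s => (a : ι)) (fun a : ↥s => (a : ι)))
      (M.submatrix (fun a : ↥s => (a : ι)) (fun a : {a : ι // ¬ a ∈ s} => (a : ι)))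
      0 1 := by
    ext i j
    rcases i with i | i <;> rcases j with j | j
    · rfl
    · rfl
    · have : M (i : ι) (j : ι) = 0 := by
        rw [h i i.2 j, if_neg]
        intro he; exact i.2 (he ▸ j.2)
      simpa [e] using this
    · have : M (i : ι) (j : ι) = ((1 : Matrix {a : ι // ¬ a ∈ s} {a : ι // ¬ a ∈ s} R) i j) := by
        rw [h i i.2 j]
        simp only [Matrix.one_apply, Subtype.ext_iff]
      simpa [e] using this
  rw [← Matrix.det_submatrix_equiv_self e, h1, Matrix.det_fromBlocks_zero₂₁, Matrix.det_one,
    mul_one]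

lemma det_eq_of_forall_col_eq_smul_add_const {A B : Matrix ι ι R} (c : ι → R) (k : ι)
    (hk : c k = 0) (h : ∀ i j, A i j = B i j + c j * B i k) : A.det = B.det := by
  rw [← Matrix.det_transpose A, ← Matrix.det_transpose B]
  exact det_eq_of_forall_row_eq_smul_add_const c k hk (fun i j => h j i)
lemma det_add_J (C : Matrix ι ι R) (m : ι) :
    Matrix.det (Matrix.of fun a b => C a b + 1) = C.det +
      Matrix.det (Matrix.of fun (a b : ↥((Finset.univ : Finset ι).erase m)) =>
        C (a : ι) (b : ι) - C m (b : ι) - C (a : ι) m + C m m) := by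
  classical
  set c : ι → R := fun a => if a = m then 0 else 1 with hc
  have hcm : c m = 0 := if_pos rfl
  set F : Matrix ι ι R := Matrix.of fun a b =>
    if a = m then (if b = m then C m m + 1 else C m b - C m m)
    else (if b = m then C a m - C m m else C a b - C m b - C a m + C m m) with hF
  set Gm : Matrix ι ι R := Matrix.of fun a b =>
    if a = m then (if b = m then C m m else C m b - C m m)
    else (if b = m then C a m - C m m else C a b - C m b - C a m + C m m) with hGm
  have claim1 : Matrix.det (Matrix.of fun a b => C a b + 1) = F.det := by
    have step1 : Matrix.det (Matrix.of fun a b => C a b + 1) =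
        Matrix.det (Matrix.of fun a b => if a = m then C m b + 1 else C a b - C m b) := by
      refine det_eq_of_forall_row_eq_smul_add_const c m hcm (fun i j => ?_)
      by_cases hi : i = m
      · simp [Matrix.of_apply, hi, hc]
      · simp [Matrix.of_apply, hi, hc]; try ring
    rw [step1]
    refine det_eq_of_forall_col_eq_smul_add_const c m hcm (fun i j => ?_)
    by_cases hi : i = m <;> by_cases hj : j = m <;>
      simp [Matrix.of_apply, hF, hc, hi, hj] <;> try ring
  have claim2 : C.det = Gm.det := by
    have step1 : C.det =
        Matrix.det (Matrix.of fun a b => if a = m then C m b else C a b - C m b) := by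
      refine det_eq_of_forall_row_eq_smul_add_const c m hcm (fun i j => ?_)
      by_cases hi : i = m
      · simp [Matrix.of_apply, hi, hc]
      · simp [Matrix.of_apply, hi, hc]; try ring
    rw [step1]
    refine det_eq_of_forall_col_eq_smul_add_const c m hcm (fun i j => ?_)
    by_cases hi : i = m <;> by_cases hj : j = m <;>
      simp only [Matrix.of_apply, hGm, hc, hi, hj, if_pos rfl, if_neg, if_true, ite_true,
        ite_false] <;> simp [hi, hj] <;> ring
  have claim3 : F = updateRow Gm m (Gm m + Pi.single m 1) := by
    ext a b
    rw [Matrix.updateRow_apply]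
    by_cases ha : a = m <;> by_cases hb : b = m <;>
      simp [hF, hGm, ha, hb, Pi.single_apply] <;> try ring
  have claim4 : (updateRow Gm m (Pi.single m 1)).det =
      Matrix.det (Matrix.of fun (a b : ↥((Finset.univ : Finset ι).erase m)) =>
        C (a : ι) (b : ι) - C m (b : ι) - C (a : ι) m + C m m) := by
    rw [det_eq_pminor_of_unit_rows (updateRow Gm m (Pi.single m 1)) ((Finset.univ : Finset ι).erase m)
      (by
        intro i hi j
        have : i = m := by
          by_contra h
          exact hi (Finset.mem_erase.mpr ⟨h, Finset.mem_univ i⟩)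
        subst this
        rw [Matrix.updateRow_self, Pi.single_apply]
        exact if_congr eq_comm rfl rfl)]
    unfold pminor
    congr 1
    ext a b
    have ha : (a : ι) ≠ m := (Finset.mem_erase.mp a.2).1
    have hb : (b : ι) ≠ m := (Finset.mem_erase.mp b.2).1
    simp only [Matrix.submatrix_apply, Matrix.updateRow_ne ha, hGm, Matrix.of_apply,
      if_neg ha, if_neg hb]
  rw [claim1, claim3, Matrix.det_updateRow_add, Matrix.updateRow_eq_self, ← claim2, claim4]

lemma det_one_add_X_smul_map (M : Matrix ι ι R) :
    (1 + (Polynomial.X : R[X]) • (M.map Polynomial.C)).det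
      = ∑ s ∈ (Finset.univ : Finset ι).powerset,
          (Polynomial.X : R[X]) ^ s.card * Polynomial.C (pminor M s) := by
  classical
  have hrows : (1 + (Polynomial.X : R[X]) • (M.map Polynomial.C) : Matrix ι ι R[X])
      = Matrix.of (fun i => (fun i => (Polynomial.X : R[X]) • (M.map Polynomial.C) i) i
          + (fun i => (1 : Matrix ι ι R[X]) i) i) := by
    ext i j; simp [Matrix.add_apply]; ring
  rw [hrows]
  set f := (Matrix.detRowAlternating : (ι → R[X]) [⋀^ι]→ₗ[R[X]] R[X]).toMultilinearMap with hf
  have : Matrix.det (Matrix.of fun i =>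
        (fun i => (Polynomial.X : R[X]) • (M.map Polynomial.C) i) i
          + (fun i => (1 : Matrix ι ι R[X]) i) i)
      = f ((fun i => (Polynomial.X : R[X]) • (M.map Polynomial.C) i)
          + (fun i => (1 : Matrix ι ι R[X]) i)) := rfl
  rw [this, f.map_add_univ]
  rw [← Finset.powerset_univ]
  refine Finset.sum_congr rfl (fun s _hs => ?_)
  set m₀ : ι → ι → R[X] := s.piecewise (fun i => (M.map Polynomial.C) i)
    (fun i => (1 : Matrix ι ι R[X]) i) with hm₀
  have hpw : s.piecewise (fun i => (Polynomial.X : R[X]) • (M.map Polynomial.C) i)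
      (fun i => (1 : Matrix ι ι R[X]) i) = s.piecewise (fun i => (Polynomial.X : R[X]) • m₀ i) m₀ := by
    funext i
    by_cases hi : i ∈ s <;> simp [Finset.piecewise, hi, hm₀]
  rw [hpw]
  rw [f.map_piecewise_smul]
  rw [Finset.prod_const]
  have hdet : f m₀ = Polynomial.C (pminor M s) := by
    have h1 : f m₀ = Matrix.det (Matrix.of m₀) := rfl
    rw [h1, det_eq_pminor_of_unit_rows (Matrix.of m₀) s (by
      intro i hi j
      simp [hm₀, Finset.piecewise, hi, Matrix.one_apply])]
    unfold pminor
    rw [RingHom.map_det, RingHom.mapMatrix_apply]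
    congr 1
    ext a b
    simp [hm₀, Finset.piecewise, a.2]
  rw [hdet, smul_eq_mul]
lemma coeff_det_one_add_X_smul_map (M : Matrix ι ι R) (c : ℕ) :
    ((1 + (Polynomial.X : R[X]) • (M.map Polynomial.C)).det).coeff c
      = ∑ s ∈ Finset.powersetCard c (Finset.univ : Finset ι), pminor M s := by
  classical
  rw [det_one_add_X_smul_map, Polynomial.finset_sum_coeff]
  rw [Finset.powersetCard_eq_filter, Finset.sum_filter]
  refine Finset.sum_congr rfl (fun s _ => ?_)
  rw [mul_comm, Polynomial.coeff_C_mul, Polynomial.coeff_X_pow]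
  by_cases h : s.card = c
  · rw [if_pos h, if_pos h.symm, mul_one]
  · rw [if_neg h, if_neg (fun hh => h hh.symm), mul_zero]

/-- Sums of principal minors of `A*B` and `B*A` agree. -/
lemma sum_pminor_mul_comm {κ : Type*} [Fintype κ] [DecidableEq κ]
    (A : Matrix ι κ R) (B : Matrix κ ι R) (c : ℕ) :
    ∑ s ∈ Finset.powersetCard c (Finset.univ : Finset ι), pminor (A * B) s
      = ∑ t ∈ Finset.powersetCard c (Finset.univ : Finset κ), pminor (B * A) t := by
  classical
  rw [← coeff_det_one_add_X_smul_map, ← coeff_det_one_add_X_smul_map]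
  congr 2
  have h1 : (Polynomial.X : R[X]) • ((A * B).map Polynomial.C)
      = ((Polynomial.X : R[X]) • (A.map Polynomial.C)) * (B.map Polynomial.C) := by
    rw [Matrix.map_mul, Matrix.smul_mul]
  have h2 : (Polynomial.X : R[X]) • ((B * A).map Polynomial.C)
      = (B.map Polynomial.C) * ((Polynomial.X : R[X]) • (A.map Polynomial.C)) := by
    rw [Matrix.map_mul, Matrix.mul_smul]
  rw [h1, h2, Matrix.det_one_add_mul_comm]

lemma pminor_mul_diagonal (M : Matrix ι ι R) (β : ι → R) (s : Finset ι) :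
    pminor (M * Matrix.diagonal β) s = (∏ i ∈ s, β i) * pminor M s := by
  unfold pminor
  have h1 : (M * Matrix.diagonal β).submatrix (fun a : ↥s => (a : ι)) (fun a : ↥s => (a : ι))
      = (M.submatrix (fun a : ↥s => (a : ι)) (fun a : ↥s => (a : ι))) *
        Matrix.diagonal (fun a : ↥s => β a) := by
    ext a b
    simp [Matrix.mul_diagonal, Matrix.submatrix_apply]
  rw [h1, Matrix.det_mul, Matrix.det_diagonal, mul_comm]
  congr 1
  exact Finset.prod_coe_sort s β


end MatrixLemmas

section config

variable {d m : ℕ}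

/-- the lifted coordinate matrix -/
noncomputable def Lmat (p : Fin m → EuclideanSpace ℝ (Fin d)) :
    Matrix (Fin (d + 1)) (Fin m) ℝ :=
  Matrix.of fun r i => Fin.lastCases 1 (fun r' => p i r') r

noncomputable def Ylift (p : Fin m → EuclideanSpace ℝ (Fin d)) (β : Fin m → ℝ) :
    Matrix (Fin (d + 1)) (Fin (d + 1)) ℝ :=
  Lmat p * Matrix.diagonal β * (Lmat p)ᵀ

lemma Lmat_last (p : Fin m → EuclideanSpace ℝ (Fin d)) (i : Fin m) :
    Lmat p (Fin.last d) i = 1 := by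
  simp [Lmat]

lemma Lmat_castSucc (p : Fin m → EuclideanSpace ℝ (Fin d)) (r : Fin d) (i : Fin m) :
    Lmat p (Fin.castSucc r) i = p i r := by
  simp [Lmat]

lemma Ylift_apply (p : Fin m → EuclideanSpace ℝ (Fin d)) (β : Fin m → ℝ)
    (r r' : Fin (d + 1)) :
    Ylift p β r r' = ∑ i, β i * Lmat p r i * Lmat p r' i := by
  unfold Ylift
  rw [Matrix.mul_apply]
  refine Finset.sum_congr rfl (fun i _ => ?_)
  rw [Matrix.mul_diagonal, Matrix.transpose_apply]
  ring

/-- Gram matrix of the (unlifted) points -/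
noncomputable def Cmat (p : Fin m → EuclideanSpace ℝ (Fin d)) :
    Matrix (Fin m) (Fin m) ℝ :=
  Matrix.of fun i j => (inner ℝ (p i) (p j) : ℝ)

lemma Cmat_add_one_eq (p : Fin m → EuclideanSpace ℝ (Fin d)) :
    (Matrix.of fun i j => Cmat p i j + 1) = (Lmat p)ᵀ * Lmat p := by
  ext i j
  simp only [Matrix.of_apply, Matrix.mul_apply, Matrix.transpose_apply, Cmat, Lmat]
  rw [Fin.sum_univ_castSucc]
  simp [PiLp.inner_apply, RCLike.inner_apply, starRingEnd_apply]
  exact Finset.sum_congr rfl (fun _ _ => mul_comm _ _)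

lemma Cmat_eq (p : Fin m → EuclideanSpace ℝ (Fin d)) :
    Cmat p = ((Lmat p).submatrix Fin.castSucc id)ᵀ * ((Lmat p).submatrix Fin.castSucc id) := by
  ext i j
  simp only [Matrix.of_apply, Matrix.mul_apply, Matrix.transpose_apply, Cmat, Lmat,
    Matrix.submatrix_apply, id_eq]
  simp [PiLp.inner_apply, RCLike.inner_apply, starRingEnd_apply]
  exact Finset.sum_congr rfl (fun _ _ => mul_comm _ _)

/-- Step A : gram face values from principal minors -/
lemma gramFace_eq_pminor (p : Fin m → EuclideanSpace ℝ (Fin d)) (s : Finset (Fin m))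
    (hs : s.Nonempty) :
    gramFace p s = pminor (Matrix.of fun i j => Cmat p i j + 1) s - pminor (Cmat p) s := by
  classical
  set m₀ : Fin m := s.min' hs with hm₀
  have hm₀s : m₀ ∈ s := s.min'_mem hs
  set m₁ : ↥s := ⟨m₀, hm₀s⟩ with hm₁
  set C' : Matrix ↥s ↥s ℝ := (Cmat p).submatrix (fun a : ↥s => (a : Fin m)) (fun a => (a : Fin m))
    with hC'
  have key := det_add_J C' m₁
  have h1 : pminor (Matrix.of fun i j => Cmat p i j + 1) s
      = Matrix.det (Matrix.of fun a b : ↥s => C' a b + 1) := rfl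
  have h2 : pminor (Cmat p) s = C'.det := rfl
  rw [h1, h2, key]
  rw [gramFace, dif_pos hs]
  have : Matrix.det (Matrix.of fun (a b : ↥(s.erase m₀)) =>
        (inner ℝ (p a.1 - p m₀) (p b.1 - p m₀) : ℝ))
      = Matrix.det (Matrix.of fun (a b : ↥((Finset.univ : Finset ↥s).erase m₁)) =>
        C' (a : ↥s) (b : ↥s) - C' m₁ (b : ↥s) - C' (a : ↥s) m₁ + C' m₁ m₁) := by
    let e : ↥(s.erase m₀) ≃ ↥((Finset.univ : Finset ↥s).erase m₁) :=
      { toFun := fun x => ⟨⟨x.1, Finset.mem_of_mem_erase x.2⟩,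
          Finset.mem_erase.mpr ⟨fun hh => (Finset.mem_erase.mp x.2).1 (by
            simpa [Subtype.ext_iff] using hh), Finset.mem_univ _⟩⟩
        invFun := fun y => ⟨(y.1 : Fin m), Finset.mem_erase.mpr
          ⟨fun hh => (Finset.mem_erase.mp y.2).1 (Subtype.ext hh), y.1.2⟩⟩
        left_inv := fun x => rfl
        right_inv := fun y => rfl }
    rw [← Matrix.det_submatrix_equiv_self e]
    congr 1
    ext a b
    have ha' : (((e a) : ↥s) : Fin m) = (a : Fin m) := rfl
    have hb' : (((e b) : ↥s) : Fin m) = (b : Fin m) := rfl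
    simp only [Matrix.submatrix_apply, Matrix.of_apply, hC', Equiv.coe_fn_mk, ha', hb']
    simp [inner_sub_left, inner_sub_right, Cmat]
    ring
  rw [this]
  ring

end config

section config2

variable {d m : ℕ}

/-- The main pointwise identity. -/
lemma main_identity (k : ℕ) (p : Fin m → EuclideanSpace ℝ (Fin d)) (β : Fin m → ℝ)
    (hβ : ∑ i, β i = 0) :
    ∑ s ∈ Finset.powersetCard (k + 1) (Finset.univ : Finset (Fin m)),
        (∏ i ∈ s, β i) * gramFace p s
      = ∑ S ∈ (Finset.powersetCard (k + 1) (Finset.univ : Finset (Fin (d + 1)))).filter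
          (fun S => Fin.last d ∈ S), pminor (Ylift p β) S := by
  classical
  -- step A+L1 : rewrite each summand
  have stepA : ∀ s ∈ Finset.powersetCard (k + 1) (Finset.univ : Finset (Fin m)),
      (∏ i ∈ s, β i) * gramFace p s
        = pminor ((Matrix.of fun i j => Cmat p i j + 1) * Matrix.diagonal β) s
          - pminor (Cmat p * Matrix.diagonal β) s := by
    intro s hs
    have hcard : s.card = k + 1 := (Finset.mem_powersetCard.mp hs).2
    have hne : s.Nonempty := Finset.card_pos.mp (by omega)
    rw [pminor_mul_diagonal, pminor_mul_diagonal, gramFace_eq_pminor p s hne]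
    ring
  rw [Finset.sum_congr rfl stepA, Finset.sum_sub_distrib]
  -- step B : lifted part
  have stepB : ∑ s ∈ Finset.powersetCard (k + 1) (Finset.univ : Finset (Fin m)),
      pminor ((Matrix.of fun i j => Cmat p i j + 1) * Matrix.diagonal β) s
        = ∑ S ∈ Finset.powersetCard (k + 1) (Finset.univ : Finset (Fin (d + 1))),
          pminor (Ylift p β) S := by
    have h1 : (Matrix.of fun i j => Cmat p i j + 1) * Matrix.diagonal β
        = (Lmat p)ᵀ * (Lmat p * Matrix.diagonal β) := by
      rw [Cmat_add_one_eq, Matrix.mul_assoc]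
    have h2 : (Lmat p * Matrix.diagonal β) * (Lmat p)ᵀ = Ylift p β := rfl
    rw [h1, ← h2, sum_pminor_mul_comm]
  -- step C : unlifted part
  have stepC : ∑ s ∈ Finset.powersetCard (k + 1) (Finset.univ : Finset (Fin m)),
      pminor (Cmat p * Matrix.diagonal β) s
        = ∑ T ∈ Finset.powersetCard (k + 1) (Finset.univ : Finset (Fin d)),
          pminor ((Ylift p β).submatrix Fin.castSucc Fin.castSucc) T := by
    set L0 : Matrix (Fin d) (Fin m) ℝ := (Lmat p).submatrix Fin.castSucc id with hL0
    have h1 : (Cmat p) * Matrix.diagonal β = L0ᵀ * (L0 * Matrix.diagonal β) := by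
      rw [Cmat_eq, Matrix.mul_assoc]
    have h2 : (L0 * Matrix.diagonal β) * L0ᵀ
        = (Ylift p β).submatrix Fin.castSucc Fin.castSucc := by
      ext r r'
      simp [Ylift, Matrix.mul_apply, Matrix.mul_diagonal, hL0, Matrix.submatrix_apply,
        Matrix.transpose_apply]
    rw [h1, ← h2, sum_pminor_mul_comm]
  rw [stepB, stepC]
  -- step D : cancellation
  have stepD : ∑ T ∈ Finset.powersetCard (k + 1) (Finset.univ : Finset (Fin d)),
      pminor ((Ylift p β).submatrix Fin.castSucc Fin.castSucc) T
        = ∑ S ∈ (Finset.powersetCard (k + 1) (Finset.univ : Finset (Fin (d + 1)))).filter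
            (fun S => Fin.last d ∉ S), pminor (Ylift p β) S := by
    set emb : Fin d ↪ Fin (d + 1) := ⟨Fin.castSucc, Fin.castSucc_injective d⟩ with hemb
    refine Finset.sum_bij (fun T _ => T.map emb) ?_ ?_ ?_ ?_
    · intro T hT
      rw [Finset.mem_filter, Finset.mem_powersetCard]
      refine ⟨⟨Finset.subset_univ _, by
        rw [Finset.card_map]; exact (Finset.mem_powersetCard.mp hT).2⟩, ?_⟩
      intro hmem
      obtain ⟨x, _, hx⟩ := Finset.mem_map.mp hmem
      simp only [hemb, Function.Embedding.coeFn_mk] at hx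
      exact absurd hx (Fin.castSucc_lt_last x).ne
    · intro T1 h1 T2 h2 heq
      exact Finset.map_injective _ heq
    · intro S hS
      rw [Finset.mem_filter, Finset.mem_powersetCard] at hS
      have hlast : ∀ y : Fin (d + 1), y ∈ S → y ≠ Fin.last d := by
        intro y hy hh
        exact hS.2 (hh ▸ hy)
      set f : {y : Fin (d + 1) // y ∈ S} → Fin d :=
        fun x => Fin.castPred x.1 (hlast x.1 x.2) with hf
      refine ⟨S.attach.image f, ?_, ?_⟩
      · rw [Finset.mem_powersetCard]
        refine ⟨Finset.subset_univ _, ?_⟩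
        have hinj : Function.Injective f := by
          intro x y hxy
          apply Subtype.ext
          have := congrArg Fin.castSucc hxy
          rwa [hf, Fin.castSucc_castPred, Fin.castSucc_castPred] at this
        rw [Finset.card_image_of_injective _ hinj, Finset.card_attach]
        exact hS.1.2
      · ext y
        simp only [Finset.mem_map, Finset.mem_image, Finset.mem_attach, true_and,
          Subtype.exists, hemb, hf, Function.Embedding.coeFn_mk]
        constructor
        · rintro ⟨x, ⟨z, hz, rfl⟩, rfl⟩
          simpa using hz
        · intro hy
          exact ⟨y.castPred (hlast y hy), ⟨y, hy, rfl⟩, Fin.castSucc_castPred _ _⟩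
    · intro T hT
      let eT : ↥T ≃ ↥(T.map emb) :=
        { toFun := fun x => ⟨Fin.castSucc x, Finset.mem_map_of_mem _ x.2⟩
          invFun := fun y => ⟨(y : Fin (d+1)).castPred (by
              obtain ⟨x, _, hx⟩ := Finset.mem_map.mp y.2
              simp only [hemb, Function.Embedding.coeFn_mk] at hx
              intro hh
              rw [← hx] at hh
              exact absurd hh (Fin.castSucc_lt_last x).ne),
            by
              obtain ⟨x, hx2, hx⟩ := Finset.mem_map.mp y.2
              simp only [hemb, Function.Embedding.coeFn_mk] at hx
              have : (y : Fin (d+1)) = Fin.castSucc x := hx.symm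
              simpa [this, Fin.castPred_castSucc] using hx2⟩
          left_inv := fun x => by apply Subtype.ext; simp [Fin.castPred_castSucc]
          right_inv := fun y => by apply Subtype.ext; simp [Fin.castSucc_castPred] }
      unfold pminor
      rw [← Matrix.det_submatrix_equiv_self eT]
      congr 1
  rw [stepD]
  rw [← Finset.sum_filter_add_sum_filter_not
    (Finset.powersetCard (k + 1) (Finset.univ : Finset (Fin (d + 1))))
    (fun S => Fin.last d ∈ S) (pminor (Ylift p β))]
  ring

end config2

section DerivDet

variable {ι : Type*} [Fintype ι] [DecidableEq ι]

lemma hasDerivWithinAt_det {M : ℝ → Matrix ι ι ℝ} {M' : Matrix ι ι ℝ} {S : Set ℝ} {τ : ℝ}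
    (h : ∀ i j, HasDerivWithinAt (fun t => M t i j) (M' i j) S τ) :
    HasDerivWithinAt (fun t => (M t).det)
      (∑ σ : Equiv.Perm ι, (Equiv.Perm.sign σ : ℝ) *
        ∑ i, (∏ j ∈ Finset.univ.erase i, M τ (σ j) j) * M' (σ i) i) S τ := by
  have hfn : (fun t => (M t).det)
      = fun t => ∑ σ : Equiv.Perm ι, (Equiv.Perm.sign σ : ℝ) * ∏ i, M t (σ i) i := by
    funext t
    rw [Matrix.det_apply']
  rw [hfn]
  refine HasDerivWithinAt.fun_sum (fun σ _ => ?_)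
  refine HasDerivWithinAt.const_mul _ ?_
  have := HasDerivWithinAt.fun_finsetProd (u := (Finset.univ : Finset ι))
    (f := fun i t => M t (σ i) i) (f' := fun i => M' (σ i) i) (s := S) (x := τ)
    (fun i _ => h (σ i) i)
  simpa [smul_eq_mul] using this

lemma hasDerivWithinAt_det_zero {M : ℝ → Matrix ι ι ℝ} {M' : Matrix ι ι ℝ} {S : Set ℝ} {τ : ℝ}
    (h : ∀ i j, HasDerivWithinAt (fun t => M t i j) (M' i j) S τ) (r : ι)
    (hrow : ∀ j, M τ r j = 0) (hcol : ∀ i, M τ i r = 0) (hcorner : M' r r = 0) :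
    HasDerivWithinAt (fun t => (M t).det) 0 S τ := by
  have h0 : (∑ σ : Equiv.Perm ι, (Equiv.Perm.sign σ : ℝ) *
      ∑ i, (∏ j ∈ Finset.univ.erase i, M τ (σ j) j) * M' (σ i) i) = 0 := by
    refine Finset.sum_eq_zero (fun σ _ => ?_)
    rw [Finset.sum_eq_zero, mul_zero]
    intro i _
    by_cases hir : i = r
    · subst hir
      by_cases hfix : σ i = i
      · rw [hfix, hcorner, mul_zero]
      · have hj : σ⁻¹ i ≠ i := by
          intro hh
          have h2 := congrArg σ hh
          rw [← Equiv.Perm.mul_apply, mul_inv_cancel, Equiv.Perm.one_apply] at h2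
          exact hfix h2.symm
        have hjmem : σ⁻¹ i ∈ Finset.univ.erase i := Finset.mem_erase.mpr ⟨hj, Finset.mem_univ _⟩
        rw [Finset.prod_eq_zero hjmem, zero_mul]
        rw [← Equiv.Perm.mul_apply, mul_inv_cancel, Equiv.Perm.one_apply]
        exact hrow _
    · have hjmem : r ∈ Finset.univ.erase i :=
        Finset.mem_erase.mpr ⟨fun hh => hir hh.symm, Finset.mem_univ _⟩
      rw [Finset.prod_eq_zero hjmem, zero_mul]
      exact hcol _
  rw [← h0]
  exact hasDerivWithinAt_det h

end DerivDet

section beta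

variable {n : ℕ}

noncomputable def bcoef (L : Matrix (Fin (n + 1)) (Fin (n + 2)) ℝ) (i : Fin (n + 2)) : ℝ :=
  (-1 : ℝ) ^ (i : ℕ) * (L.submatrix id i.succAbove).det

lemma bcoef_dep (L : Matrix (Fin (n + 1)) (Fin (n + 2)) ℝ) (r : Fin (n + 1)) :
    ∑ i, bcoef L i * L r i = 0 := by
  classical
  set Sq : Matrix (Fin (n + 2)) (Fin (n + 2)) ℝ :=
    Matrix.of (Fin.cases (L r) (fun j => L j)) with hSq
  have hz : Sq.det = 0 := by
    refine Matrix.det_zero_of_row_eq (Fin.succ_ne_zero r).symm ?_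
    funext j
    show Sq 0 j = Sq r.succ j
    simp [hSq, Fin.cases_zero, Fin.cases_succ]
  have hexp := Matrix.det_succ_row_zero Sq
  rw [hz] at hexp
  have hsub : ∀ j : Fin (n + 2), (Sq.submatrix Fin.succ j.succAbove)
      = L.submatrix id j.succAbove := by
    intro j
    ext a b
    simp [hSq, Matrix.submatrix_apply]
  have : ∑ i, bcoef L i * L r i
      = ∑ j : Fin (n + 2), (-1) ^ (j : ℕ) * Sq 0 j * (Sq.submatrix Fin.succ j.succAbove).det := by
    refine Finset.sum_congr rfl (fun j _ => ?_)
    rw [hsub j]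
    have : Sq 0 j = L r j := by simp [hSq]
    rw [this, bcoef]
    ring
  rw [this, ← hexp]

lemma sum_smul_eq_zero_of_coords {m' : ℕ} {d : ℕ} (g : Fin m' → ℝ)
    (q : Fin m' → EuclideanSpace ℝ (Fin d))
    (h : ∀ r : Fin d, ∑ j, g j * q j r = 0) : ∑ j, g j • q j = 0 := by
  have hinj : Function.Injective (⇑(EuclideanSpace.equiv (Fin d) ℝ)) :=
    (EuclideanSpace.equiv (Fin d) ℝ).injective
  apply hinj
  rw [map_sum, map_zero]
  funext r
  rw [Finset.sum_apply]
  simpa using h r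

/-- a dependence vanishing at one coordinate vanishes identically -/
lemma dep_eq_zero_of_vanish {d : ℕ} (A0 : Fin (d + 2) → EuclideanSpace ℝ (Fin d))
    (hgp : InGeneralPosition A0) (γ : Fin (d + 2) → ℝ)
    (h1 : ∑ i, γ i = 0) (h2 : ∑ i, γ i • A0 i = 0) (i₀ : Fin (d + 2)) (h3 : γ i₀ = 0) :
    ∀ i, γ i = 0 := by
  classical
  have hcard : ((Finset.univ : Finset (Fin (d + 2))).erase i₀).card = d + 1 := by
    rw [Finset.card_erase_of_mem (Finset.mem_univ _)]
    simp
  have hAI := hgp _ hcard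
  have hkey := affineIndependent_iff.mp hAI Finset.univ (fun x => γ x)
  have hs1 : ∑ x : ↥((Finset.univ : Finset (Fin (d + 2))).erase i₀), γ (x : Fin (d + 2)) = 0 := by
    rw [Finset.sum_coe_sort _ (fun i => γ i), Finset.sum_erase_eq_sub (Finset.mem_univ _), h1,
      h3, sub_zero]
  have hs2 : ∑ x : ↥((Finset.univ : Finset (Fin (d + 2))).erase i₀),
      γ (x : Fin (d + 2)) • A0 (x : Fin (d + 2)) = 0 := by
    rw [Finset.sum_coe_sort _ (fun i => γ i • A0 i),
      Finset.sum_erase_eq_sub (Finset.mem_univ _), h2, h3, zero_smul, sub_zero]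
  have hzero := hkey hs1 hs2
  intro i
  by_cases hi : i = i₀
  · rw [hi]; exact h3
  · exact hzero ⟨i, Finset.mem_erase.mpr ⟨hi, Finset.mem_univ _⟩⟩ (Finset.mem_univ _)

lemma bcoef_ne_zero {d : ℕ} (A0 : Fin (d + 2) → EuclideanSpace ℝ (Fin d))
    (hgp : InGeneralPosition A0) (i : Fin (d + 2)) :
    bcoef (Lmat A0) i ≠ 0 := by
  classical
  unfold bcoef
  intro hcontra
  have hdet : ((Lmat A0).submatrix id i.succAbove).det = 0 := by
    rcases mul_eq_zero.mp hcontra with h | h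
    · exact absurd h (by positivity)
    · exact h
  obtain ⟨g, hg0, hgv⟩ := (Matrix.exists_mulVec_eq_zero_iff).mpr hdet
  -- build affine independence of the n+1 points indexed by succAbove
  have hinj : Function.Injective i.succAbove := Fin.succAbove_right_injective
  set semb : Finset (Fin (d + 2)) :=
    Finset.map ⟨i.succAbove, hinj⟩ Finset.univ with hsemb
  have hcard : semb.card = d + 1 := by
    rw [hsemb, Finset.card_map, Finset.card_univ]
    simp
  have hAI := hgp _ hcard
  set e : Fin (d + 1) ↪ ↥semb :=
    ⟨fun j => ⟨i.succAbove j, by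
        rw [hsemb]
        exact Finset.mem_map_of_mem _ (Finset.mem_univ j)⟩,
      fun a b hab => hinj (by simpa [Subtype.ext_iff] using hab)⟩ with he
  have hAI2 : AffineIndependent ℝ (fun j : Fin (d + 1) => A0 (i.succAbove j)) := by
    have := hAI.comp_embedding e
    convert this using 1
    rfl
  have hrow : ∀ r : Fin (d + 1), ∑ j, g j * Lmat A0 r (i.succAbove j) = 0 := by
    intro r
    have := congrFun hgv r
    rw [Matrix.mulVec, dotProduct] at this
    simpa [Matrix.submatrix_apply, mul_comm] using this
  have hsum1 : ∑ j, g j = 0 := by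
    have := hrow (Fin.last d)
    simpa [Lmat] using this
  have hsum2 : ∑ j, g j • A0 (i.succAbove j) = 0 := by
    refine sum_smul_eq_zero_of_coords g _ (fun r => ?_)
    have := hrow r.castSucc
    simpa [Lmat] using this
  have := affineIndependent_iff.mp hAI2 Finset.univ g hsum1 hsum2
  exact hg0 (funext fun j => this j (Finset.mem_univ _))

end beta

/-- derivative sign of monotone functions -/
lemma deriv_nonneg_of_monotoneOn {f : ℝ → ℝ} {d ε τ : ℝ}
    (hm : MonotoneOn f (Set.Icc 0 ε)) (hτ0 : 0 ≤ τ) (hτε : τ < ε)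
    (hd : HasDerivWithinAt f d (Set.Ici τ) τ) : 0 ≤ d := by
  have h1 : HasDerivWithinAt f d (Set.Ioi τ) τ := hd.mono Set.Ioi_subset_Ici_self
  have h2 := (hasDerivWithinAt_iff_tendsto_slope (f := f) (s := Set.Ioi τ)).mp h1
  have h3 : Set.Ioi τ \ {τ} = Set.Ioi τ := Set.diff_singleton_eq_self (by simp)
  rw [h3] at h2
  refine ge_of_tendsto h2 ?_
  filter_upwards [Ioo_mem_nhdsGT_of_mem (Set.mem_Ico.mpr ⟨le_refl τ, hτε⟩)] with x hx
  rw [slope_def_field]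
  apply div_nonneg
  · rw [sub_nonneg]
    exact hm (Set.mem_Icc.mpr ⟨hτ0, hτε.le⟩)
      (Set.mem_Icc.mpr ⟨hτ0.trans hx.1.le, hx.2.le⟩) hx.1.le
  · rw [sub_nonneg]
    exact hx.1.le

lemma deriv_nonpos_of_antitoneOn {f : ℝ → ℝ} {d ε τ : ℝ}
    (hm : AntitoneOn f (Set.Icc 0 ε)) (hτ0 : 0 ≤ τ) (hτε : τ < ε)
    (hd : HasDerivWithinAt f d (Set.Ici τ) τ) : d ≤ 0 := by
  have := deriv_nonneg_of_monotoneOn (f := fun x => -f x) (d := -d) hm.neg hτ0 hτε hd.neg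
  linarith

set_option maxHeartbeats 2000000 in
/-- The frameworks `G_{n,k}` and `F_{n,k}` are `k`-unyielding in `ℝⁿ` for `C¹` motions:
if each `k`-face's squared volume is monotone in the direction dictated by the sign of the
product of its coefficients (case `G_{n,k}`), or in the opposite direction (case `F_{n,k}`),
then all the squared volumes of the `k`-faces are preserved for sufficiently small time. -/
theorem k_unyielding_in_Rn {n : ℕ}
    (A : Fin (n + 2) → ℝ → EuclideanSpace ℝ (Fin n))
    (hA : ∀ i, ContDiff ℝ 1 (A i))
    (hgp : InGeneralPosition (fun i => A i 0))
    (α : Fin (n + 2) → ℝ) (hα : ∀ i, α i ≠ 0)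
    (hsum : ∑ i, α i = 0) (hsum2 : ∑ i, α i • A i 0 = 0)
    (k : ℕ) (hk1 : 1 ≤ k) (hkn : k ≤ n)
    (ε : ℝ) (hε : 0 < ε)
    (hcon :
      (∀ s ∈ Finset.powersetCard (k + 1) (Finset.univ : Finset (Fin (n + 2))),
        ((∏ i ∈ s, α i) < 0 →
          AntitoneOn (fun t : ℝ => gramFace (fun i => A i t) s) (Set.Icc 0 ε)) ∧
        (0 < (∏ i ∈ s, α i) →
          MonotoneOn (fun t : ℝ => gramFace (fun i => A i t) s) (Set.Icc 0 ε)))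
      ∨
      (∀ s ∈ Finset.powersetCard (k + 1) (Finset.univ : Finset (Fin (n + 2))),
        ((∏ i ∈ s, α i) < 0 →
          MonotoneOn (fun t : ℝ => gramFace (fun i => A i t) s) (Set.Icc 0 ε)) ∧
        (0 < (∏ i ∈ s, α i) →
          AntitoneOn (fun t : ℝ => gramFace (fun i => A i t) s) (Set.Icc 0 ε)))) :
    ∃ ε' : ℝ, 0 < ε' ∧ ε' ≤ ε ∧
      ∀ s ∈ Finset.powersetCard (k + 1) (Finset.univ : Finset (Fin (n + 2))),
        ∀ t ∈ Set.Icc (0 : ℝ) ε',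
          gramFace (fun i => A i t) s = gramFace (fun i => A i 0) s := by
  classical
  set P : ℝ → (Fin (n + 2) → EuclideanSpace ℝ (Fin n)) := fun t i => A i t with hPdef
  set β : ℝ → Fin (n + 2) → ℝ := fun t => bcoef (Lmat (P t)) with hβdef
  set 𝒮 : Finset (Finset (Fin (n + 2))) :=
    Finset.powersetCard (k + 1) (Finset.univ : Finset (Fin (n + 2))) with h𝒮
  -- basic facts about A
  have hAder : ∀ i t, HasDerivAt (A i) (deriv (A i) t) t := fun i t =>
    (((hA i).differentiable one_ne_zero) t).hasDerivAt
  have hAcont : ∀ i, Continuous (A i) := fun i => (hA i).continuous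
  -- dependence identity for β
  have hdepL : ∀ t r, ∑ i, β t i * Lmat (P t) r i = 0 := fun t r => bcoef_dep (Lmat (P t)) r
  have hβsum : ∀ t, ∑ i, β t i = 0 := by
    intro t
    have := hdepL t (Fin.last n)
    simpa [Lmat_last] using this
  have hβcoord : ∀ t (r : Fin n), ∑ i, β t i * A i t r = 0 := by
    intro t r
    have := hdepL t (Fin.castSucc r)
    simpa [Lmat_castSucc] using this
  -- β 0 is proportional to α
  have hβ0ne : ∀ i, β 0 i ≠ 0 := fun i => bcoef_ne_zero (P 0) hgp i
  have hprop : ∀ i, α 0 * β 0 i = β 0 0 * α i := by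
    have h2 : ∑ i, (α 0 * β 0 i - β 0 0 * α i) • A i 0 = 0 := by
      have hb : ∑ i, β 0 i • A i 0 = 0 :=
        sum_smul_eq_zero_of_coords _ _ (fun r => hβcoord 0 r)
      have : ∑ i, (α 0 * β 0 i - β 0 0 * α i) • A i 0
          = α 0 • (∑ i, β 0 i • A i 0) - β 0 0 • (∑ i, α i • A i 0) := by
        rw [Finset.smul_sum, Finset.smul_sum, ← Finset.sum_sub_distrib]
        refine Finset.sum_congr rfl (fun i _ => ?_)
        rw [sub_smul, smul_smul, smul_smul]
      rw [this, hb, hsum2, smul_zero, smul_zero, sub_zero]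
    have h1 : ∑ i, (α 0 * β 0 i - β 0 0 * α i) = 0 := by
      rw [Finset.sum_sub_distrib, ← Finset.mul_sum, ← Finset.mul_sum, hβsum 0, hsum,
        mul_zero, mul_zero, sub_zero]
    have h3 := dep_eq_zero_of_vanish (P 0) hgp _ h1 h2 0 (by ring)
    intro i
    have := h3 i
    linarith
  set c : ℝ := β 0 0 / α 0 with hcdef
  have hc : ∀ i, β 0 i = c * α i := by
    intro i
    rw [hcdef, div_mul_eq_mul_div, ← hprop i, mul_comm (α 0) (β 0 i),
      mul_div_assoc, div_self (hα 0), mul_one]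
  have hcne : c ≠ 0 := by
    intro hh
    exact hβ0ne 0 (by rw [hc 0, hh, zero_mul])
  -- continuity of β
  have hβcont : ∀ i, Continuous (fun t => β t i) := by
    intro i
    refine Continuous.mul continuous_const ?_
    refine Continuous.matrix_det ?_
    refine continuous_matrix (fun r j => ?_)
    show Continuous fun t => Lmat (P t) r (i.succAbove j)
    induction r using Fin.lastCases with
    | last =>
      have : (fun t => Lmat (P t) (Fin.last n) (i.succAbove j)) = fun _ => (1 : ℝ) :=
        funext fun t => Lmat_last _ _
      rw [this]; exact continuous_const
    | cast r' =>
      have : (fun t => Lmat (P t) (Fin.castSucc r') (i.succAbove j))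
          = fun t => A (i.succAbove j) t r' := funext fun t => Lmat_castSucc _ _ _
      rw [this]
      exact (EuclideanSpace.proj r' : EuclideanSpace ℝ (Fin n) →L[ℝ] ℝ).continuous.comp
        (hAcont _)
  -- sign persistence
  obtain ⟨δ, hδpos, hδ⟩ : ∃ δ > 0, ∀ t, |t| < δ → ∀ i, 0 < β t i * β 0 i := by
    have hopen : IsOpen {t : ℝ | ∀ i, 0 < β t i * β 0 i} := by
      have : {t : ℝ | ∀ i, 0 < β t i * β 0 i}
          = ⋂ i, (fun t => β t i * β 0 i) ⁻¹' (Set.Ioi 0) := by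
        ext t; simp [Set.mem_iInter, Set.mem_preimage]
      rw [this]
      exact isOpen_iInter_of_finite (fun i =>
        (isOpen_Ioi).preimage ((hβcont i).mul continuous_const))
    have h0mem : (0 : ℝ) ∈ {t : ℝ | ∀ i, 0 < β t i * β 0 i} := by
      intro i
      exact mul_self_pos.mpr (hβ0ne i)
    obtain ⟨δ, hδpos, hball⟩ := Metric.isOpen_iff.mp hopen 0 h0mem
    exact ⟨δ, hδpos, fun t ht i => hball (by simpa [Real.dist_eq] using ht) i⟩
  set ε₁ : ℝ := min ε (δ / 2) with hε₁def
  have hε₁pos : 0 < ε₁ := lt_min hε (by linarith)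
  have hε₁ε : ε₁ ≤ ε := min_le_left _ _
  have hpersist : ∀ τ, 0 ≤ τ → τ ≤ ε₁ → ∀ i, 0 < β τ i * β 0 i := by
    intro τ hτ0 hτ1 i
    refine hδ τ ?_ i
    rw [abs_of_nonneg hτ0]
    calc τ ≤ ε₁ := hτ1
    _ ≤ δ / 2 := min_le_right _ _
    _ < δ := by linarith
  -- differentiability of each face volume
  have hDer : ∀ s ∈ 𝒮, ∀ τ : ℝ,
      ∃ d, HasDerivWithinAt (fun t => gramFace (P t) s) d (Set.Ici τ) τ := by
    intro s hs τ
    have hne : s.Nonempty := Finset.card_pos.mp (by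
      rw [(Finset.mem_powersetCard.mp hs).2]; omega)
    have hfun : (fun t => gramFace (P t) s) = fun t =>
        Matrix.det (Matrix.of fun (a b : ↥(s.erase (s.min' hne))) =>
          (inner ℝ (A a.1 t - A (s.min' hne) t) (A b.1 t - A (s.min' hne) t) : ℝ)) := by
      funext t
      rw [gramFace, dif_pos hne]
    rw [hfun]
    refine ⟨_, hasDerivWithinAt_det (M := fun t =>
      Matrix.of fun (a b : ↥(s.erase (s.min' hne))) =>
        (inner ℝ (A a.1 t - A (s.min' hne) t) (A b.1 t - A (s.min' hne) t) : ℝ))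
      (M' := Matrix.of fun (a b : ↥(s.erase (s.min' hne))) =>
        (inner ℝ (A a.1 τ - A (s.min' hne) τ)
            (deriv (A b.1) τ - deriv (A (s.min' hne)) τ) : ℝ)
          + (inner ℝ (deriv (A a.1) τ - deriv (A (s.min' hne)) τ)
            (A b.1 τ - A (s.min' hne) τ) : ℝ)) (fun a b => ?_)⟩
    exact (HasDerivWithinAt.inner ℝ
      (((hAder a.1 τ).sub (hAder (s.min' hne) τ)).hasDerivWithinAt)
      (((hAder b.1 τ).sub (hAder (s.min' hne) τ)).hasDerivWithinAt))
  set Dval : Finset (Fin (n + 2)) → ℝ → ℝ :=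
    fun s τ => derivWithin (fun t => gramFace (P t) s) (Set.Ici τ) τ with hDdef
  have hDval : ∀ s ∈ 𝒮, ∀ τ : ℝ,
      HasDerivWithinAt (fun t => gramFace (P t) s) (Dval s τ) (Set.Ici τ) τ := by
    intro s hs τ
    obtain ⟨d, hd⟩ := hDer s hs τ
    have : Dval s τ = d := hd.derivWithin (uniqueDiffOn_Ici τ τ Set.self_mem_Ici)
    rw [this]; exact hd
  -- the key vanishing of derivatives
  have hkey : ∀ τ, 0 ≤ τ → τ < ε₁ → ∀ s ∈ 𝒮, Dval s τ = 0 := by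
    intro τ hτ0 hτε₁
    have hβτsum : ∑ i, β τ i = 0 := hβsum τ
    -- the derivative of the weighted sum vanishes (identity + zero-row argument)
    have hsumzero : ∑ s ∈ 𝒮, (∏ i ∈ s, β τ i) * Dval s τ = 0 := by
      have hident : (fun h : ℝ => ∑ s ∈ 𝒮, (∏ i ∈ s, β τ i) * gramFace (P h) s)
          = fun h : ℝ => ∑ S ∈ (Finset.powersetCard (k + 1)
              (Finset.univ : Finset (Fin (n + 1)))).filter (fun S => Fin.last n ∈ S),
              pminor (Ylift (P h) (β τ)) S :=
        funext fun h => main_identity k (P h) (β τ) hβτsum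
      have hLHS : HasDerivWithinAt
          (fun h : ℝ => ∑ s ∈ 𝒮, (∏ i ∈ s, β τ i) * gramFace (P h) s)
          (∑ s ∈ 𝒮.attach, (∏ i ∈ s.1, β τ i) * Dval s.1 τ) (Set.Ici τ) τ := by
        have : (fun h : ℝ => ∑ s ∈ 𝒮, (∏ i ∈ s, β τ i) * gramFace (P h) s)
            = fun h : ℝ => ∑ s ∈ 𝒮.attach, (∏ i ∈ s.1, β τ i) * gramFace (P h) s.1 := by
          funext h
          rw [Finset.sum_attach 𝒮 (fun s => (∏ i ∈ s, β τ i) * gramFace (P h) s)]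
        rw [this]
        exact HasDerivWithinAt.fun_sum (fun s _ =>
          (hDval s.1 s.2 τ).const_mul ((∏ i ∈ s.1, β τ i)))
      -- derivative of RHS is 0
      have hRHS : HasDerivWithinAt
          (fun h : ℝ => ∑ S ∈ (Finset.powersetCard (k + 1)
              (Finset.univ : Finset (Fin (n + 1)))).filter (fun S => Fin.last n ∈ S),
              pminor (Ylift (P h) (β τ)) S) 0 (Set.Ici τ) τ := by
        have hz : (0 : ℝ) = ∑ S ∈ (Finset.powersetCard (k + 1)
            (Finset.univ : Finset (Fin (n + 1)))).filter (fun S => Fin.last n ∈ S),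
            (0 : ℝ) := by simp
        rw [hz]
        refine HasDerivWithinAt.fun_sum (fun S hS => ?_)
        have hlastS : Fin.last n ∈ S := (Finset.mem_filter.mp hS).2
        -- matrix of derivatives of L
        set L' : Matrix (Fin (n + 1)) (Fin (n + 2)) ℝ :=
          Matrix.of fun r i => Fin.lastCases 0 (fun r' => deriv (A i) τ r') r with hL'def
        have hL'last : ∀ i, L' (Fin.last n) i = 0 := by
          intro i; simp [hL'def]
        have hLder : ∀ (r : Fin (n + 1)) (i : Fin (n + 2)),
            HasDerivWithinAt (fun h => Lmat (P h) r i) (L' r i) (Set.Ici τ) τ := by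
          intro r i
          induction r using Fin.lastCases with
          | last =>
            have h1 : (fun h => Lmat (P h) (Fin.last n) i) = fun _ => (1 : ℝ) :=
              funext fun h => Lmat_last _ _
            have h2 : L' (Fin.last n) i = 0 := hL'last i
            rw [h1, h2]
            exact (hasDerivWithinAt_const τ _ (1 : ℝ))
          | cast r' =>
            have h1 : (fun h => Lmat (P h) (Fin.castSucc r') i) = fun h => A i h r' :=
              funext fun h => Lmat_castSucc _ _ _
            have h2 : L' (Fin.castSucc r') i = deriv (A i) τ r' := by simp [hL'def]
            rw [h1, h2]
            have h3 := ((EuclideanSpace.proj r' :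
                EuclideanSpace ℝ (Fin n) →L[ℝ] ℝ).hasFDerivAt).comp_hasDerivAt τ
              (hAder i τ)
            exact h3.hasDerivWithinAt
        -- entrywise derivative of the Ylift principal submatrix
        have hpm : (fun h : ℝ => pminor (Ylift (P h) (β τ)) S)
            = fun h : ℝ => ((Ylift (P h) (β τ)).submatrix
                (fun a : ↥S => (a : Fin (n+1))) (fun a : ↥S => (a : Fin (n+1)))).det := by
          funext h; rfl
        rw [hpm]
        refine hasDerivWithinAt_det_zero
          (M := fun h => (Ylift (P h) (β τ)).submatrix
            (fun a : ↥S => (a : Fin (n+1))) (fun a : ↥S => (a : Fin (n+1))))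
          (M' := Matrix.of fun a b : ↥S => ∑ i, β τ i *
            (L' (a : Fin (n+1)) i * Lmat (P τ) (b : Fin (n+1)) i
              + Lmat (P τ) (a : Fin (n+1)) i * L' (b : Fin (n+1)) i))
          (fun a b => ?_) ⟨Fin.last n, hlastS⟩ (fun b => ?_) (fun a => ?_) ?_
        · -- entry derivatives
          have hfun : (fun h => (Ylift (P h) (β τ)).submatrix
              (fun a : ↥S => (a : Fin (n+1))) (fun a : ↥S => (a : Fin (n+1))) a b)
              = fun h => ∑ i, β τ i * Lmat (P h) (a : Fin (n+1)) i
                  * Lmat (P h) (b : Fin (n+1)) i := by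
            funext h
            exact Ylift_apply (P h) (β τ) _ _
          rw [hfun]
          have : (Matrix.of fun a b : ↥S => ∑ i, β τ i *
              (L' (a : Fin (n+1)) i * Lmat (P τ) (b : Fin (n+1)) i
                + Lmat (P τ) (a : Fin (n+1)) i * L' (b : Fin (n+1)) i)) a b
              = ∑ i, β τ i * (L' (a : Fin (n+1)) i * Lmat (P τ) (b : Fin (n+1)) i
                + Lmat (P τ) (a : Fin (n+1)) i * L' (b : Fin (n+1)) i) := rfl
          rw [this]
          refine HasDerivWithinAt.fun_sum (fun i _ => ?_)
          have h4 := ((hLder (a : Fin (n+1)) i).mul (hLder (b : Fin (n+1)) i)).const_mul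
            (β τ i)
          have hcomm : (fun h => β τ i * Lmat (P h) (a : Fin (n+1)) i
              * Lmat (P h) (b : Fin (n+1)) i)
              = fun h => β τ i * (Lmat (P h) (a : Fin (n+1)) i
                * Lmat (P h) (b : Fin (n+1)) i) := by
            funext h; ring
          rw [hcomm]
          exact h4
        · -- zero row
          show (Ylift (P τ) (β τ)) (Fin.last n) (b : Fin (n+1)) = 0
          rw [Ylift_apply]
          have : ∀ i, β τ i * Lmat (P τ) (Fin.last n) i * Lmat (P τ) (b : Fin (n+1)) i
              = β τ i * Lmat (P τ) (b : Fin (n+1)) i := by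
            intro i; rw [Lmat_last]; ring
          rw [Finset.sum_congr rfl (fun i _ => this i)]
          exact hdepL τ _
        · -- zero column
          show (Ylift (P τ) (β τ)) (a : Fin (n+1)) (Fin.last n) = 0
          rw [Ylift_apply]
          have : ∀ i, β τ i * Lmat (P τ) (a : Fin (n+1)) i * Lmat (P τ) (Fin.last n) i
              = β τ i * Lmat (P τ) (a : Fin (n+1)) i := by
            intro i; rw [Lmat_last]; ring
          rw [Finset.sum_congr rfl (fun i _ => this i)]
          exact hdepL τ _
        · -- corner
          show ∑ i, β τ i * (L' (Fin.last n) i * Lmat (P τ) (Fin.last n) i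
              + Lmat (P τ) (Fin.last n) i * L' (Fin.last n) i) = 0
          refine Finset.sum_eq_zero (fun i _ => ?_)
          rw [hL'last i]
          ring
      rw [hident] at hLHS
      have huniq : UniqueDiffWithinAt ℝ (Set.Ici τ) τ := uniqueDiffOn_Ici τ τ Set.self_mem_Ici
      have h1 := hLHS.derivWithin huniq
      have h2 := hRHS.derivWithin huniq
      rw [h1] at h2
      rw [← Finset.sum_attach 𝒮 (fun s => (∏ i ∈ s, β τ i) * Dval s τ)]
      exact h2
    -- sign bookkeeping
    have hτε : τ < ε := lt_of_lt_of_le hτε₁ hε₁ε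
    have hβprod : ∀ i, 0 < β τ i * β 0 i := hpersist τ hτ0 hτε₁.le
    have hβτne : ∀ i, β τ i ≠ 0 := by
      intro i hh
      have := hβprod i
      rw [hh, zero_mul] at this
      exact lt_irrefl 0 this
    have hPne : ∀ s : Finset (Fin (n + 2)), (∏ i ∈ s, β τ i) ≠ 0 :=
      fun s => Finset.prod_ne_zero_iff.mpr (fun i _ => hβτne i)
    have hQne : ∀ s : Finset (Fin (n + 2)), (∏ i ∈ s, α i) ≠ 0 :=
      fun s => Finset.prod_ne_zero_iff.mpr (fun i _ => hα i)
    have hsign : ∀ s ∈ 𝒮, 0 < (∏ i ∈ s, β τ i) * ((∏ i ∈ s, α i) * c ^ (k + 1)) := by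
      intro s hs
      have hscard : s.card = k + 1 := (Finset.mem_powersetCard.mp hs).2
      have h1 : ∀ i ∈ s, 0 < β τ i * α i * c := by
        intro i _
        have h2 := hβprod i
        rw [hc i] at h2
        nlinarith [h2]
      have h2 : 0 < ∏ i ∈ s, (β τ i * α i * c) := Finset.prod_pos h1
      rw [Finset.prod_mul_distrib, Finset.prod_mul_distrib, Finset.prod_const, hscard] at h2
      nlinarith [h2]
    have hcpow : c ^ (k + 1) ≠ 0 := pow_ne_zero _ hcne
    have huniform : (∀ s ∈ 𝒮, 0 ≤ (∏ i ∈ s, β τ i) * Dval s τ)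
        ∨ (∀ s ∈ 𝒮, (∏ i ∈ s, β τ i) * Dval s τ ≤ 0) := by
      rcases hcon with hG | hF <;> rcases hcpow.lt_or_gt with hcp | hcp
      · -- G case, c^(k+1) < 0 : all ≤ 0
        right
        intro s hs
        have hsign_s := hsign s hs
        rcases (hQne s).lt_or_gt with hQneg | hQpos
        · have hd := deriv_nonpos_of_antitoneOn ((hG s hs).1 hQneg) hτ0 hτε (hDval s hs τ)
          have hQc : 0 < (∏ i ∈ s, α i) * c ^ (k + 1) := mul_pos_of_neg_of_neg hQneg hcp
          have hP : 0 < (∏ i ∈ s, β τ i) := by nlinarith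
          exact mul_nonpos_of_nonneg_of_nonpos hP.le hd
        · have hd := deriv_nonneg_of_monotoneOn ((hG s hs).2 hQpos) hτ0 hτε (hDval s hs τ)
          have hQc : (∏ i ∈ s, α i) * c ^ (k + 1) < 0 := mul_neg_of_pos_of_neg hQpos hcp
          have hP : (∏ i ∈ s, β τ i) < 0 := by nlinarith
          exact mul_nonpos_of_nonpos_of_nonneg hP.le hd
      · -- G case, 0 < c^(k+1) : all ≥ 0
        left
        intro s hs
        have hsign_s := hsign s hs
        rcases (hQne s).lt_or_gt with hQneg | hQpos
        · have hd := deriv_nonpos_of_antitoneOn ((hG s hs).1 hQneg) hτ0 hτε (hDval s hs τ)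
          have hQc : (∏ i ∈ s, α i) * c ^ (k + 1) < 0 := mul_neg_of_neg_of_pos hQneg hcp
          have hP : (∏ i ∈ s, β τ i) < 0 := by nlinarith
          rw [← neg_mul_neg]
          exact mul_nonneg (by linarith) (by linarith)
        · have hd := deriv_nonneg_of_monotoneOn ((hG s hs).2 hQpos) hτ0 hτε (hDval s hs τ)
          have hQc : 0 < (∏ i ∈ s, α i) * c ^ (k + 1) := mul_pos hQpos hcp
          have hP : 0 < (∏ i ∈ s, β τ i) := by nlinarith
          exact mul_nonneg hP.le hd
      · -- F case, c^(k+1) < 0 : all ≥ 0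
        left
        intro s hs
        have hsign_s := hsign s hs
        rcases (hQne s).lt_or_gt with hQneg | hQpos
        · have hd := deriv_nonneg_of_monotoneOn ((hF s hs).1 hQneg) hτ0 hτε (hDval s hs τ)
          have hQc : 0 < (∏ i ∈ s, α i) * c ^ (k + 1) := mul_pos_of_neg_of_neg hQneg hcp
          have hP : 0 < (∏ i ∈ s, β τ i) := by nlinarith
          exact mul_nonneg hP.le hd
        · have hd := deriv_nonpos_of_antitoneOn ((hF s hs).2 hQpos) hτ0 hτε (hDval s hs τ)
          have hQc : (∏ i ∈ s, α i) * c ^ (k + 1) < 0 := mul_neg_of_pos_of_neg hQpos hcp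
          have hP : (∏ i ∈ s, β τ i) < 0 := by nlinarith
          rw [← neg_mul_neg]
          exact mul_nonneg (by linarith) (by linarith)
      · -- F case, 0 < c^(k+1) : all ≤ 0
        right
        intro s hs
        have hsign_s := hsign s hs
        rcases (hQne s).lt_or_gt with hQneg | hQpos
        · have hd := deriv_nonneg_of_monotoneOn ((hF s hs).1 hQneg) hτ0 hτε (hDval s hs τ)
          have hQc : (∏ i ∈ s, α i) * c ^ (k + 1) < 0 := mul_neg_of_neg_of_pos hQneg hcp
          have hP : (∏ i ∈ s, β τ i) < 0 := by nlinarith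
          exact mul_nonpos_of_nonpos_of_nonneg hP.le hd
        · have hd := deriv_nonpos_of_antitoneOn ((hF s hs).2 hQpos) hτ0 hτε (hDval s hs τ)
          have hQc : 0 < (∏ i ∈ s, α i) * c ^ (k + 1) := mul_pos hQpos hcp
          have hP : 0 < (∏ i ∈ s, β τ i) := by nlinarith
          exact mul_nonpos_of_nonneg_of_nonpos hP.le hd
    intro s hs
    have hterm : (∏ i ∈ s, β τ i) * Dval s τ = 0 := by
      rcases huniform with hpos | hneg
      · exact (Finset.sum_eq_zero_iff_of_nonneg hpos).mp hsumzero s hs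
      · exact (Finset.sum_eq_zero_iff_of_nonpos hneg).mp hsumzero s hs
    rcases mul_eq_zero.mp hterm with h | h
    · exact absurd h (hPne s)
    · exact h
  -- conclude: each face volume is constant on [0, ε₁]
  refine ⟨ε₁, hε₁pos, hε₁ε, ?_⟩
  intro s hs t ht
  have hcontV : Continuous (fun t => gramFace (P t) s) := by
    have hne : s.Nonempty := Finset.card_pos.mp (by
      rw [(Finset.mem_powersetCard.mp hs).2]; omega)
    have hfun : (fun t => gramFace (P t) s) = fun t =>
        Matrix.det (Matrix.of fun (a b : ↥(s.erase (s.min' hne))) =>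
          (inner ℝ (A a.1 t - A (s.min' hne) t) (A b.1 t - A (s.min' hne) t) : ℝ)) := by
      funext t
      rw [gramFace, dif_pos hne]
    rw [hfun]
    refine Continuous.matrix_det ?_
    refine continuous_matrix (fun a b => ?_)
    exact Continuous.inner ((hAcont a.1).sub (hAcont (s.min' hne)))
      ((hAcont b.1).sub (hAcont (s.min' hne)))
  have hconst := constant_of_has_deriv_right_zero (f := fun t => gramFace (P t) s)
    (a := 0) (b := ε₁) (hcontV.continuousOn) ?_
  · exact hconst t ht
  · intro x hx
    have hx' := Set.mem_Ico.mp hx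
    have hD := hDval s hs x
    rw [hkey x hx'.1 hx'.2 s hs] at hD
    exact hD
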